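/- Let g be a nilpotent almost abelian Lie algebra of dimension 2n+2 whose center has dimension at most 2n−1 (equivalently, g is not isomorphic to h_3 ⊕ R^{2n-1}). Then g has a unique abelian ideal of codimension one. -/

import Mathlib

lemma abelian_ideal_bracket {g : Type*} [LieRing g] [LieAlgebra ℝ g]
    (I : LieIdeal ℝ g) (h : IsLieAbelian I) {x y : g} (hx : x ∈ I) (hy : y ∈ I) :
    ⁅x, y⁆ = 0 := by
  have := h.trivial (⟨x, hx⟩ : I) (⟨y, hy⟩ : I)
  have h2 : ((⁅(⟨x, hx⟩ : I), (⟨y, hy⟩ : I)⁆ : I) : g) = ⁅x, y⁆ :=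
    LieSubalgebra.coe_bracket (I : LieSubalgebra ℝ g) _ _
  rw [this] at h2
  simpa using h2.symm

/-- Let `g` be a nilpotent almost abelian Lie algebra of dimension `2n+2`
whose centre has dimension at most `2n-1` (equivalently, `g ≇ h₃ ⊕ ℝ^{2n-1}`).
Then `g` has a unique abelian ideal of codimension one. -/
theorem stmt3 (n : ℕ) (hn : 1 ≤ n)
    {g : Type*} [LieRing g] [LieAlgebra ℝ g] [FiniteDimensional ℝ g]
    [LieRing.IsNilpotent g] (hnab : ¬ IsLieAbelian g)
    (hdim : Module.finrank ℝ g = 2 * n + 2)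
    (a : LieIdeal ℝ g) (habel : IsLieAbelian a)
    (hadim : Module.finrank ℝ a = 2 * n + 1)
    (hcentre : Module.finrank ℝ (LieAlgebra.center ℝ g) ≤ 2 * n - 1) :
    ∃! b : LieIdeal ℝ g, IsLieAbelian b ∧ Module.finrank ℝ b = 2 * n + 1 := by
  refine ⟨a, ⟨habel, hadim⟩, ?_⟩
  rintro b ⟨hbabel, hbdim⟩
  by_contra hne
  set A : Submodule ℝ g := a.toSubmodule with hA
  set B : Submodule ℝ g := b.toSubmodule with hB
  have hAdim : Module.finrank ℝ A = 2 * n + 1 := hadim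
  have hBdim : Module.finrank ℝ B = 2 * n + 1 := hbdim
  have hABne : A ≠ B := by
    intro h
    exact hne (LieSubmodule.toSubmodule_injective h.symm)
  -- sup has rank 2n+2
  have hsup_le : Module.finrank ℝ (A ⊔ B : Submodule ℝ g) ≤ 2 * n + 2 := by
    rw [← hdim]; exact Submodule.finrank_le _
  have hsup_ne : Module.finrank ℝ (A ⊔ B : Submodule ℝ g) ≠ 2 * n + 1 := by
    intro h
    have h1 : B = A ⊔ B := Submodule.eq_of_le_of_finrank_le le_sup_right (by omega)
    have h2 : A = A ⊔ B := Submodule.eq_of_le_of_finrank_le le_sup_left (by omega)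
    exact hABne (h2.trans h1.symm)
  have hsup_ge : 2 * n + 1 ≤ Module.finrank ℝ (A ⊔ B : Submodule ℝ g) := by
    rw [← hAdim]; exact Submodule.finrank_mono le_sup_left
  have hsup : Module.finrank ℝ (A ⊔ B : Submodule ℝ g) = 2 * n + 2 := by omega
  have hsup_top : A ⊔ B = ⊤ := Submodule.eq_top_of_finrank_eq (hsup.trans hdim.symm)
  have hinf : Module.finrank ℝ (A ⊓ B : Submodule ℝ g) = 2 * n := by
    have := Submodule.finrank_sup_add_finrank_inf_eq A B
    omega
  -- A ⊓ B is central
  have hcent : (A ⊓ B : Submodule ℝ g) ≤ (LieAlgebra.center ℝ g).toSubmodule := by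
    intro z hz
    rw [LieSubmodule.mem_toSubmodule, LieModule.mem_maxTrivSubmodule]
    intro x
    have hx : x ∈ A ⊔ B := by rw [hsup_top]; trivial
    obtain ⟨p, hp, q, hq, rfl⟩ := Submodule.mem_sup.mp hx
    have h1 : ⁅p, z⁆ = 0 := abelian_ideal_bracket a habel hp hz.1
    have h2 : ⁅q, z⁆ = 0 := abelian_ideal_bracket b hbabel hq hz.2
    rw [add_lie, h1, h2, add_zero]
  have : 2 * n ≤ Module.finrank ℝ (LieAlgebra.center ℝ g) := by
    rw [← hinf]; exact Submodule.finrank_mono hcent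
  omega
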